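/- Let n ≥ 2, α ∈ (1/2, 1], and γ = n^{α−1}. Let A be a (deterministic) symmetric n×n matrix with entries in [0,1] and zero diagonal, with degree matrix D (diagonal, D_{ii} = Σ_j A_{ij}). Let Â be a random symmetric n×n matrix whose entries Â_{ij} = Â_{ji} for i < j are independent Bernoulli random variables with success probabilities γ·A_{ij}, and Â_{ii} = 0; let D̂ be its degree matrix (diagonal, D̂_{ii} = Σ_j Â_{ij}). Then for every τ > 0, with probability at least 1 − 2·n·e^{−τ²/(1+τ)}: |D_{ii} − (1/γ)·D̂_{ii}| ≤ 2·n^{1−α/2}·τ for every i ∈ {1, …, n}. -/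

import Mathlib

open MeasureTheory
open scoped ENNReal

/-- Bernoulli measure on `Bool` with success probability `p`. -/
noncomputable def bern (p : ℝ) : Measure Bool :=
  ENNReal.ofReal (1 - p) • Measure.dirac false + ENNReal.ofReal p • Measure.dirac true

/-- The law of the independent edge indicators of the subsampled graph: each edge
`{i, j}` with `i < j` is present independently with probability `γ · A i j`. -/
noncomputable def edgeMeasure {n : ℕ} (A : Matrix (Fin n) (Fin n) ℝ) (γ : ℝ) :
    Measure ({q : Fin n × Fin n // q.1 < q.2} → Bool) :=
  Measure.pi fun q => bern (γ * A q.1.1 q.1.2)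

/-- The (symmetric, zero-diagonal) adjacency matrix built from the edge indicators. -/
noncomputable def hatA {n : ℕ} (e : {q : Fin n × Fin n // q.1 < q.2} → Bool) :
    Matrix (Fin n) (Fin n) ℝ :=
  Matrix.of fun i j =>
    if h : i < j then (if e ⟨(i, j), h⟩ then 1 else 0)
    else if h' : j < i then (if e ⟨(j, i), h'⟩ then 1 else 0)
    else 0

lemma bern_isProb {p : ℝ} (h0 : 0 ≤ p) (h1 : p ≤ 1) : IsProbabilityMeasure (bern p) := by
  constructor
  simp only [bern, Measure.add_apply, Measure.smul_apply, Measure.dirac_apply' _ MeasurableSet.univ,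
    Set.indicator_univ, smul_eq_mul, mul_one, Pi.one_apply]
  rw [← ENNReal.ofReal_add (by linarith) h0]
  norm_num

lemma integral_bern {p : ℝ} (h0 : 0 ≤ p) (h1 : p ≤ 1) (f : Bool → ℝ) :
    ∫ x, f x ∂(bern p) = (1 - p) * f false + p * f true := by
  haveI : IsProbabilityMeasure (bern p) := bern_isProb h0 h1
  rw [bern, integral_add_measure]
  · rw [integral_smul_measure, integral_smul_measure, integral_dirac, integral_dirac,
      ENNReal.toReal_ofReal (by linarith), ENNReal.toReal_ofReal h0]
    simp [smul_eq_mul]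
  · exact (Integrable.of_finite).smul_measure (by simp)
  · exact (Integrable.of_finite).smul_measure (by simp)

lemma mgf_pi {ι : Type} [Fintype ι] (p c : ι → ℝ) (hp : ∀ q, p q ∈ Set.Icc (0:ℝ) 1)
    (hc : ∀ q, c q = 0 ∨ c q = 1) (s : ℝ) :
    ∫ e : ι → Bool, Real.exp (s * ∑ q, c q * (if e q then 1 else 0))
        ∂(Measure.pi fun q => bern (p q))
      ≤ Real.exp ((Real.exp s - 1) * ∑ q, c q * p q) := by
  haveI hP : ∀ q, IsProbabilityMeasure (bern (p q)) := fun q => bern_isProb (hp q).1 (hp q).2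
  have key : ∫ e : ι → Bool, Real.exp (s * ∑ q, c q * (if e q then 1 else 0))
        ∂(Measure.pi fun q => bern (p q))
      = ∏ q, ∫ x : Bool, Real.exp (s * (c q * (if x then 1 else 0))) ∂(bern (p q)) := by
    have h := MeasureTheory.integral_fintype_prod_eq_prod (𝕜 := ℝ) (ι := ι) (E := fun _ : ι => Bool)
      (fun q (x : Bool) => Real.exp (s * (c q * (if x then 1 else 0))))
      (μ := fun q => bern (p q))
    simp_rw [Finset.mul_sum, Real.exp_sum]
    exact h
  rw [key]
  have hfac : ∀ q, ∫ x : Bool, Real.exp (s * (c q * (if x then 1 else 0))) ∂(bern (p q))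
      = (1 - p q) + p q * Real.exp (s * c q) := by
    intro q
    rw [integral_bern (hp q).1 (hp q).2]
    simp [mul_comm]
  calc ∏ q, ∫ x : Bool, Real.exp (s * (c q * (if x then 1 else 0))) ∂(bern (p q))
      ≤ ∏ q, Real.exp ((Real.exp s - 1) * (c q * p q)) := by
        apply Finset.prod_le_prod
        · intro q _
          rw [hfac q]
          have := (hp q).1; have := (hp q).2
          have := Real.exp_pos (s * c q)
          nlinarith
        · intro q _
          rw [hfac q]
          rcases hc q with h | h
          · simp [h]
          · rw [h]
            simp only [mul_one]
            have h1 : (1 - p q) + p q * Real.exp s = p q * (Real.exp s - 1) + 1 := by ring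
            rw [h1]
            exact (Real.add_one_le_exp _).trans_eq (by rw [one_mul, mul_comm])
    _ = Real.exp ((Real.exp s - 1) * ∑ q, c q * p q) := by
        rw [← Real.exp_sum, Finset.mul_sum]

lemma tail_upper {ι : Type} [Fintype ι] (p c : ι → ℝ) (hp : ∀ q, p q ∈ Set.Icc (0:ℝ) 1)
    (hc : ∀ q, c q = 0 ∨ c q = 1) (lam t : ℝ) (hlam : 0 ≤ lam) :
    (Measure.pi fun q => bern (p q))
        {e : ι → Bool | (∑ q, c q * p q) + t ≤ ∑ q, c q * (if e q then 1 else 0)}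
      ≤ ENNReal.ofReal
          (Real.exp ((Real.exp lam - 1 - lam) * (∑ q, c q * p q) - lam * t)) := by
  haveI hP : ∀ q, IsProbabilityMeasure (bern (p q)) := fun q => bern_isProb (hp q).1 (hp q).2
  set P : Measure (ι → Bool) := Measure.pi fun q => bern (p q) with hPdef
  haveI : IsProbabilityMeasure P := by rw [hPdef]; infer_instance
  set X : (ι → Bool) → ℝ := fun e => ∑ q, c q * (if e q then 1 else 0) with hX
  set μc : ℝ := ∑ q, c q * p q with hμ
  have hInt : Integrable (fun ω => Real.exp (lam * X ω)) P := Integrable.of_finite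
  have h := ProbabilityTheory.measure_ge_le_exp_mul_mgf (μ := P) (X := X) (μc + t) hlam hInt
  have hmgf : ProbabilityTheory.mgf X P lam ≤ Real.exp ((Real.exp lam - 1) * μc) :=
    mgf_pi p c hp hc lam
  have h2 : (P {ω | μc + t ≤ X ω}).toReal
      ≤ Real.exp ((Real.exp lam - 1 - lam) * μc - lam * t) := by
    refine h.trans ?_
    calc Real.exp (-lam * (μc + t)) * ProbabilityTheory.mgf X P lam
        ≤ Real.exp (-lam * (μc + t)) * Real.exp ((Real.exp lam - 1) * μc) := by
          exact mul_le_mul_of_nonneg_left hmgf (Real.exp_pos _).le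
      _ = Real.exp ((Real.exp lam - 1 - lam) * μc - lam * t) := by
          rw [← Real.exp_add]; ring_nf
  calc P {e | μc + t ≤ X e} = ENNReal.ofReal (P {e | μc + t ≤ X e}).toReal :=
        (ENNReal.ofReal_toReal (measure_ne_top _ _)).symm
    _ ≤ _ := ENNReal.ofReal_le_ofReal h2

lemma tail_lower {ι : Type} [Fintype ι] (p c : ι → ℝ) (hp : ∀ q, p q ∈ Set.Icc (0:ℝ) 1)
    (hc : ∀ q, c q = 0 ∨ c q = 1) (lam t : ℝ) (hlam : 0 ≤ lam) :
    (Measure.pi fun q => bern (p q))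
        {e : ι → Bool | t - (∑ q, c q * p q) ≤ -∑ q, c q * (if e q then 1 else 0)}
      ≤ ENNReal.ofReal
          (Real.exp ((Real.exp (-lam) - 1 + lam) * (∑ q, c q * p q) - lam * t)) := by
  haveI hP : ∀ q, IsProbabilityMeasure (bern (p q)) := fun q => bern_isProb (hp q).1 (hp q).2
  set P : Measure (ι → Bool) := Measure.pi fun q => bern (p q) with hPdef
  haveI : IsProbabilityMeasure P := by rw [hPdef]; infer_instance
  set X : (ι → Bool) → ℝ := fun e => -∑ q, c q * (if e q then 1 else 0) with hX
  set μc : ℝ := ∑ q, c q * p q with hμ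
  have hInt : Integrable (fun ω => Real.exp (lam * X ω)) P := Integrable.of_finite
  have h := ProbabilityTheory.measure_ge_le_exp_mul_mgf (μ := P) (X := X) (t - μc) hlam hInt
  have hmgf : ProbabilityTheory.mgf X P lam ≤ Real.exp ((Real.exp (-lam) - 1) * μc) := by
    have := mgf_pi p c hp hc (-lam)
    refine le_trans (le_of_eq ?_) this
    unfold ProbabilityTheory.mgf
    congr 1
    funext e
    rw [hX]
    ring_nf
  have h2 : (P {ω | t - μc ≤ X ω}).toReal
      ≤ Real.exp ((Real.exp (-lam) - 1 + lam) * μc - lam * t) := by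
    refine h.trans ?_
    calc Real.exp (-lam * (t - μc)) * ProbabilityTheory.mgf X P lam
        ≤ Real.exp (-lam * (t - μc)) * Real.exp ((Real.exp (-lam) - 1) * μc) :=
          mul_le_mul_of_nonneg_left hmgf (Real.exp_pos _).le
      _ = Real.exp ((Real.exp (-lam) - 1 + lam) * μc - lam * t) := by
          rw [← Real.exp_add]; ring_nf
  calc P {e | t - μc ≤ X e} = ENNReal.ofReal (P {e | t - μc ≤ X e}).toReal :=
        (ENNReal.ofReal_toReal (measure_ne_top _ _)).symm
    _ ≤ _ := ENNReal.ofReal_le_ofReal h2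

lemma exp_quad_upper {x : ℝ} (h0 : 0 ≤ x) (h1 : x ≤ 1) :
    Real.exp x - 1 - x ≤ (3/4) * x^2 := by
  have hb := Real.exp_bound (x := x) (by rw [abs_of_nonneg h0]; exact h1) (n := 2) (by norm_num)
  have e1 : ∑ i ∈ Finset.range 2, x ^ i / (Nat.factorial i) = 1 + x := by
    simp [Finset.sum_range_succ]
  rw [e1] at hb
  norm_num [Nat.factorial] at hb

  have := abs_le.mp hb
  linarith [this.2]

lemma exp_quad_lower {x : ℝ} (h0 : 0 ≤ x) (h1 : x ≤ 1) :
    Real.exp (-x) - 1 + x ≤ (3/4) * x^2 := by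
  have hb := Real.exp_bound (x := -x) (by rw [abs_neg, abs_of_nonneg h0]; exact h1)
    (n := 2) (by norm_num)
  have e1 : ∑ i ∈ Finset.range 2, (-x) ^ i / (Nat.factorial i) = 1 - x := by
    simp [Finset.sum_range_succ]; ring
  rw [e1] at hb
  norm_num [Nat.factorial] at hb

  have := abs_le.mp hb
  linarith [this.2]

lemma sum_edge {n : ℕ} (M : Matrix (Fin n) (Fin n) ℝ) (hsym : ∀ a b, M a b = M b a)
    (hdiag : ∀ a, M a a = 0) (i : Fin n) :
    ∑ q : {q : Fin n × Fin n // q.1 < q.2},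
        (if q.1.1 = i ∨ q.1.2 = i then (1:ℝ) else 0) * M q.1.1 q.1.2
      = ∑ j, M i j := by
  rw [← Finset.sum_subtype (Finset.univ.filter (fun q : Fin n × Fin n => q.1 < q.2))
    (by simp) (fun x : Fin n × Fin n => (if x.1 = i ∨ x.2 = i then (1:ℝ) else 0) * M x.1 x.2)]
  rw [Finset.sum_filter, Fintype.sum_prod_type]
  have hinner : ∀ a : Fin n, a ≠ i →
      (∑ b, if a < b then (if a = i ∨ b = i then (1:ℝ) else 0) * M a b else 0)
        = if a < i then M a i else 0 := by
    intro a ha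
    rw [Finset.sum_eq_single i]
    · simp [ha]
    · intro b _ hb
      simp [ha, hb]
    · simp
  rw [← Finset.add_sum_erase _ _ (Finset.mem_univ i)]
  have h1 : (∑ b, if i < b then (if i = i ∨ b = i then (1:ℝ) else 0) * M i b else 0)
      = ∑ b, if i < b then M i b else 0 := by
    apply Finset.sum_congr rfl
    intro b _
    by_cases h : i < b <;> simp [h]
  have h2 : (∑ a ∈ Finset.univ.erase i,
        ∑ b, if a < b then (if a = i ∨ b = i then (1:ℝ) else 0) * M a b else 0)
      = ∑ a ∈ Finset.univ.erase i, (if a < i then M i a else 0) := by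
    apply Finset.sum_congr rfl
    intro a ha
    rw [hinner a (Finset.ne_of_mem_erase ha), hsym a i]
  rw [h1, h2, Finset.sum_erase _ (by simp)]
  rw [← Finset.sum_add_distrib]
  apply Finset.sum_congr rfl
  intro j _
  rcases lt_trichotomy i j with h | h | h
  · simp [h, not_lt_of_gt h]
  · subst h; simp [hdiag i]
  · simp [h, not_lt_of_gt h]

/-- Degree concentration under sparse edge subsampling: with probability at least
`1 − 2n·e^{−τ²/(1+τ)}`, every vertex satisfies
`|D_{ii} − (1/γ)·D̂_{ii}| ≤ 2·n^{1−α/2}·τ`. -/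
theorem stmt13 (n : ℕ) (hn : 2 ≤ n) (α : ℝ) (hα1 : 1 / 2 < α) (hα2 : α ≤ 1)
    (γ : ℝ) (hγ : γ = (n : ℝ) ^ (α - 1))
    (A : Matrix (Fin n) (Fin n) ℝ) (hsymm : A.IsSymm)
    (h01 : ∀ i j, A i j ∈ Set.Icc (0 : ℝ) 1) (hdiag : ∀ i, A i i = 0)
    (τ : ℝ) (hτ : 0 < τ) :
    ENNReal.ofReal (1 - 2 * n * Real.exp (-(τ ^ 2) / (1 + τ))) ≤
      edgeMeasure A γ
        {e | ∀ i : Fin n,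
          |(∑ j, A i j) - (1 / γ) * ∑ j, hatA e i j| ≤ 2 * (n : ℝ) ^ (1 - α / 2) * τ} := by
  -- basic numeric facts
  classical
  have hn0 : (0:ℝ) < n := by
    have : (2:ℝ) ≤ n := by exact_mod_cast hn
    linarith
  have hn1 : (1:ℝ) ≤ n := by
    have : (2:ℝ) ≤ n := by exact_mod_cast hn
    linarith
  have hγpos : 0 < γ := by rw [hγ]; exact Real.rpow_pos_of_pos hn0 _
  have hγ1 : γ ≤ 1 := by
    rw [hγ]; exact Real.rpow_le_one_of_one_le_of_nonpos hn1 (by linarith)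
  set ι := {q : Fin n × Fin n // q.1 < q.2} with hι
  set p : ι → ℝ := fun q => γ * A q.1.1 q.1.2 with hpdef
  have hp : ∀ q, p q ∈ Set.Icc (0:ℝ) 1 := by
    intro q
    constructor
    · exact mul_nonneg hγpos.le (h01 _ _).1
    · calc γ * A q.1.1 q.1.2 ≤ 1 * 1 :=
        mul_le_mul hγ1 (h01 _ _).2 (h01 _ _).1 zero_le_one
      _ = 1 := by norm_num
  haveI hPq : ∀ q : ι, IsProbabilityMeasure (bern (γ * A q.1.1 q.1.2)) :=
    fun q => bern_isProb (hp q).1 (hp q).2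
  haveI hPP : IsProbabilityMeasure (edgeMeasure A γ) := by
    unfold edgeMeasure; infer_instance
  have hsym' : ∀ a b, A a b = A b a := fun a b => (congrFun (congrFun hsymm a) b).symm
  -- coefficient vectors
  set c : Fin n → ι → ℝ := fun i q => if q.1.1 = i ∨ q.1.2 = i then 1 else 0 with hcdef
  have hc : ∀ i q, c i q = 0 ∨ c i q = 1 := by
    intro i q
    by_cases h : q.1.1 = i ∨ q.1.2 = i
    · right; simp [hcdef, h]
    · left; simp [hcdef, h]
  -- scalars
  set s : ℝ := (n:ℝ) ^ (α/2) with hsdef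
  have hspos : 0 < s := Real.rpow_pos_of_pos hn0 _
  have hs1 : 1 ≤ s := Real.one_le_rpow hn1 (by linarith)
  set w : ℝ := (n:ℝ) ^ α with hwdef
  have hws : s ^ 2 = w := by
    rw [hsdef, hwdef, ← Real.rpow_natCast ((n:ℝ) ^ (α/2)) 2, ← Real.rpow_mul hn0.le]
    norm_num
  set t : ℝ := γ * (2 * (n:ℝ) ^ (1 - α/2) * τ) with htdef
  have hγs : γ * (n:ℝ) ^ (1 - α/2) = s := by
    rw [hγ, hsdef, ← Real.rpow_add hn0]
    congr 1; ring
  have ht2 : t = 2 * s * τ := by rw [htdef, ← hγs]; ring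
  have h1τ : (0:ℝ) < 1 + τ := by linarith
  set lam : ℝ := τ / ((1 + τ) * s) with hlamdef
  have hlam0 : 0 ≤ lam := by positivity
  have hlam1 : lam ≤ 1 := by
    rw [hlamdef, div_le_one (by positivity)]
    nlinarith
  -- the key numeric bound on exponents
  have hkey : (3/4) * lam^2 * w - lam * t ≤ -(τ^2) / (1 + τ) := by
    have e3 : lam^2 * w = τ^2 / (1+τ)^2 := by
      rw [← hws, hlamdef]
      field_simp
    have e4 : lam * t = 2 * τ^2 / (1+τ) := by
      rw [ht2, hlamdef]
      field_simp
    have e5 : (3/4) * lam^2 * w = (3/4) * (lam^2 * w) := by ring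
    rw [e5, e3, e4, ← sub_nonpos]
    have e7 : 3/4 * (τ^2/(1+τ)^2) - 2*τ^2/(1+τ) - -τ^2/(1+τ)
        = (3/4*τ^2 - τ^2*(1+τ))/((1+τ)^2) := by
      field_simp
      ring
    rw [e7]
    apply div_nonpos_of_nonpos_of_nonneg
    · nlinarith
    · positivity
  -- per-vertex quantities
  have hμD : ∀ i, (∑ q, c i q * p q) = γ * ∑ j, A i j := by
    intro i
    have := sum_edge (fun a b => γ * A a b)
      (fun a b => by simp [hsym' a b]) (fun a => by simp [hdiag a]) i
    rw [← Finset.mul_sum] at this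
    exact this
  have hμ0 : ∀ i, 0 ≤ ∑ q, c i q * p q := by
    intro i
    apply Finset.sum_nonneg
    intro q _
    rcases hc i q with h | h <;> simp [h, (hp q).1]
  have hμw : ∀ i, (∑ q, c i q * p q) ≤ w := by
    intro i
    rw [hμD i]
    have hA : (∑ j, A i j) ≤ n := by
      calc (∑ j, A i j) ≤ ∑ _j : Fin n, (1:ℝ) :=
        Finset.sum_le_sum (fun j _ => (h01 i j).2)
      _ = n := by simp
    have hγn : γ * (n:ℝ) = w := by
      rw [hγ, hwdef]
      calc (n:ℝ)^(α-1) * (n:ℝ) = (n:ℝ)^(α-1) * (n:ℝ)^(1:ℝ) := by rw [Real.rpow_one]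
        _ = (n:ℝ)^(α-1+1) := (Real.rpow_add hn0 _ _).symm
        _ = (n:ℝ)^α := by norm_num
    calc γ * ∑ j, A i j ≤ γ * n := mul_le_mul_of_nonneg_left hA hγpos.le
      _ = w := hγn
  -- hatA facts
  have hhat_sym : ∀ (e : ι → Bool) a b, hatA e a b = hatA e b a := by
    intro e a b
    rcases lt_trichotomy a b with h | h | h
    · simp [hatA, h, not_lt_of_gt h]
    · subst h; rfl
    · simp [hatA, h, not_lt_of_gt h]
  have hhat_diag : ∀ (e : ι → Bool) a, hatA e a a = 0 := by
    intro e a; simp [hatA]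
  have hhat_edge : ∀ (e : ι → Bool) (q : ι), hatA e q.1.1 q.1.2 = if e q then 1 else 0 := by
    intro e q
    have hq : q.1.1 < q.1.2 := q.2
    simp only [hatA, Matrix.of_apply, dif_pos hq]
    rfl
  have hXD : ∀ (e : ι → Bool) i,
      (∑ q, c i q * (if e q then (1:ℝ) else 0)) = ∑ j, hatA e i j := by
    intro e i
    have := sum_edge (hatA e) (hhat_sym e) (hhat_diag e) i
    rw [← this]
    apply Finset.sum_congr rfl
    intro q _
    rw [hhat_edge e q]
  -- the bad events
  set Bp : Fin n → Set (ι → Bool) := fun i =>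
    {e | (∑ q, c i q * p q) + t ≤ ∑ q, c i q * (if e q then 1 else 0)} with hBpdef
  set Bm : Fin n → Set (ι → Bool) := fun i =>
    {e | t - (∑ q, c i q * p q) ≤ -∑ q, c i q * (if e q then 1 else 0)} with hBmdef
  set β : ℝ≥0∞ := ENNReal.ofReal (Real.exp (-(τ^2) / (1 + τ))) with hβdef
  have hexp1 : 0 ≤ Real.exp lam - 1 - lam := by
    have := Real.add_one_le_exp lam; linarith
  have hexp2 : 0 ≤ Real.exp (-lam) - 1 + lam := by
    have := Real.add_one_le_exp (-lam); linarith
  have hquad : 0 ≤ (3/4) * lam^2 := by positivity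
  have hBple : ∀ i, edgeMeasure A γ (Bp i) ≤ β := by
    intro i
    refine le_trans (tail_upper p (c i) hp (hc i) lam t hlam0) ?_
    rw [hβdef]
    apply ENNReal.ofReal_le_ofReal
    apply Real.exp_le_exp.2
    calc (Real.exp lam - 1 - lam) * (∑ q, c i q * p q) - lam * t
        ≤ (3/4) * lam^2 * w - lam * t := by
          have := mul_le_mul (exp_quad_upper hlam0 hlam1) (hμw i) (hμ0 i) hquad
          linarith
      _ ≤ -(τ^2) / (1 + τ) := hkey
  have hBmle : ∀ i, edgeMeasure A γ (Bm i) ≤ β := by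
    intro i
    refine le_trans (tail_lower p (c i) hp (hc i) lam t hlam0) ?_
    rw [hβdef]
    apply ENNReal.ofReal_le_ofReal
    apply Real.exp_le_exp.2
    calc (Real.exp (-lam) - 1 + lam) * (∑ q, c i q * p q) - lam * t
        ≤ (3/4) * lam^2 * w - lam * t := by
          have := mul_le_mul (exp_quad_lower hlam0 hlam1) (hμw i) (hμ0 i) hquad
          linarith
      _ ≤ -(τ^2) / (1 + τ) := hkey
  -- union bound
  set Bad : Set (ι → Bool) := ⋃ i, Bp i ∪ Bm i with hBaddef
  have hBadle : edgeMeasure A γ Bad ≤ ENNReal.ofReal (2 * n * Real.exp (-(τ^2) / (1 + τ))) := by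
    calc edgeMeasure A γ Bad ≤ ∑' i : Fin n, edgeMeasure A γ (Bp i ∪ Bm i) :=
          measure_iUnion_le _
      _ = ∑ i : Fin n, edgeMeasure A γ (Bp i ∪ Bm i) := tsum_fintype _
      _ ≤ ∑ i : Fin n, (β + β) := by
          apply Finset.sum_le_sum
          intro i _
          exact le_trans (measure_union_le _ _) (add_le_add (hBple i) (hBmle i))
      _ = n * (β + β) := by
          rw [Finset.sum_const, Finset.card_univ, Fintype.card_fin, nsmul_eq_mul]
      _ = ENNReal.ofReal (2 * n * Real.exp (-(τ^2) / (1 + τ))) := by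
          rw [hβdef, ← two_mul]
          rw [ENNReal.ofReal_mul (by positivity), ENNReal.ofReal_mul (by norm_num)]
          rw [ENNReal.ofReal_natCast, ENNReal.ofReal_ofNat]
          ring
  -- complement inclusion
  have hsub : Badᶜ ⊆ {e : ι → Bool | ∀ i : Fin n,
      |(∑ j, A i j) - (1 / γ) * ∑ j, hatA e i j| ≤ 2 * (n : ℝ) ^ (1 - α / 2) * τ} := by
    intro e he
    simp only [hBaddef, Set.mem_compl_iff, Set.mem_iUnion, Set.mem_union, not_exists,
      not_or] at he
    intro i
    obtain ⟨h1, h2⟩ := he i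
    rw [hBpdef] at h1
    rw [hBmdef] at h2
    simp only [Set.mem_setOf_eq, not_le] at h1 h2
    set X : ℝ := ∑ q, c i q * (if e q then (1:ℝ) else 0) with hXdef
    set μi : ℝ := ∑ q, c i q * p q with hμidef
    have hd1 : X - μi < t := by linarith
    have hd2 : μi - X < t := by linarith
    have habs : |μi - X| ≤ t := by
      rw [abs_le]; constructor <;> linarith
    have heq : (∑ j, A i j) - (1 / γ) * ∑ j, hatA e i j = (1/γ) * (μi - X) := by
      rw [hμidef, hμD i, hXdef, hXD e i]
      have hγne : γ ≠ 0 := ne_of_gt hγpos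
      field_simp
    rw [heq, abs_mul, abs_of_pos (by positivity : (0:ℝ) < 1/γ)]
    calc (1/γ) * |μi - X| ≤ (1/γ) * t := by
          exact mul_le_mul_of_nonneg_left habs (by positivity)
      _ = 2 * (n : ℝ) ^ (1 - α / 2) * τ := by
          rw [htdef]
          field_simp
  -- finish
  set G : Set (ι → Bool) := {e | ∀ i : Fin n,
      |(∑ j, A i j) - (1 / γ) * ∑ j, hatA e i j| ≤ 2 * (n : ℝ) ^ (1 - α / 2) * τ} with hGdef
  have hKnn : 0 ≤ 2 * (n:ℝ) * Real.exp (-(τ^2) / (1 + τ)) := by positivity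
  have hfin : ENNReal.ofReal (1 - 2 * n * Real.exp (-(τ ^ 2) / (1 + τ)))
      ≤ edgeMeasure A γ G := by
    calc ENNReal.ofReal (1 - 2 * n * Real.exp (-(τ ^ 2) / (1 + τ)))
        = 1 - ENNReal.ofReal (2 * n * Real.exp (-(τ ^ 2) / (1 + τ))) := by
          rw [ENNReal.ofReal_sub _ hKnn, ENNReal.ofReal_one]
      _ ≤ 1 - edgeMeasure A γ Bad := tsub_le_tsub_left hBadle 1
      _ ≤ edgeMeasure A γ Badᶜ := by
          rw [tsub_le_iff_right]
          calc (1:ℝ≥0∞) = edgeMeasure A γ Set.univ := (measure_univ).symm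
            _ = edgeMeasure A γ (Badᶜ ∪ Bad) := by rw [Set.compl_union_self]
            _ ≤ edgeMeasure A γ Badᶜ + edgeMeasure A γ Bad := measure_union_le _ _
      _ ≤ edgeMeasure A γ G := measure_mono hsub
  exact hfin
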